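/- Under the penalty-method hypotheses, the full time-accumulated a posteriori bound holds: let $(e^{u,j})_{j=0}^K \subseteq X$ with $e^{u,0} = 0$, $(e^{p,j})_{j=1}^K \subseteq Y$, and suppose for each $1 \leq j \leq K$: $\tfrac{1}{\Delta t}m(e^{u,j}-e^{u,j-1},v) + a(e^{u,j},v) + b(v,e^{p,j}) = r^{1,j}(v)$ for all $v \in X$, and $b(e^{u,j},q) - \varepsilon\, c(e^{p,j},q) = r^{2,j}(q)$ for all $q \in Y$. Then for every $1 \leq k \leq K$: $\|e^{u,k}\|_m^2 + \Delta t\sum_{j=1}^k \big(a(e^{u,j},e^{u,j}) + \varepsilon\, c(e^{p,j},e^{p,j})\big) \leq \Delta t \sum_{j=1}^k \Big(\tfrac{\|r^{1,j}\|_{X'}^2}{\alpha_a} + \tfrac{\|r^{2,j}\|_{Y'}^2}{\varepsilon\alpha_c}\Big)$. -/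

import Mathlib

set_option maxHeartbeats 1000000

lemma mul_step_aux (Δt x s t A B : ℝ) (hΔt : 0 < Δt)
    (h : (1 / Δt) * x + s / 2 + t / 2 ≤ A + B) :
    2 * x + Δt * (s + t) ≤ 2 * (Δt * (A + B)) := by
  have h2 := mul_le_mul_of_nonneg_left h hΔt.le
  have he : Δt * ((1 / Δt) * x + s / 2 + t / 2) = x + Δt * (s + t) / 2 := by
    field_simp; ring
  rw [he] at h2
  linarith

lemma rhs_eq_aux (Δt x y A B : ℝ) (hA : A ≠ 0) (hB : B ≠ 0) :
    Δt * (x / A + y / B) = 2 * (Δt * (x / (2 * A) + y / (2 * B))) := by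
  field_simp

lemma young_aux (x y α : ℝ) (hα : 0 < α) : x * y ≤ x ^ 2 / (2 * α) + α * y ^ 2 / 2 := by
  have h : 0 ≤ (x - α * y) ^ 2 := sq_nonneg _
  have he : x ^ 2 / (2 * α) + α * y ^ 2 / 2 = (x ^ 2 + α ^ 2 * y ^ 2) / (2 * α) := by
    field_simp
  rw [he, le_div_iff₀ (by positivity)]
  nlinarith

/-- Proposition 2.3: full time-accumulated a posteriori bound for the penalty method. -/
theorem stmt11 {X Y : Type*}
    [NormedAddCommGroup X] [InnerProductSpace ℝ X] [FiniteDimensional ℝ X]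
    [NormedAddCommGroup Y] [InnerProductSpace ℝ Y] [FiniteDimensional ℝ Y]
    (a m : X →ₗ[ℝ] X →ₗ[ℝ] ℝ) (c : Y →ₗ[ℝ] Y →ₗ[ℝ] ℝ) (b : X →ₗ[ℝ] Y →ₗ[ℝ] ℝ)
    (αa αc ε Δt : ℝ) (hαa : 0 < αa) (hαc : 0 < αc) (hε : 0 < ε) (hΔt : 0 < Δt)
    (hacoer : ∀ v : X, αa * ‖v‖ ^ 2 ≤ a v v)
    (hccoer : ∀ q : Y, αc * ‖q‖ ^ 2 ≤ c q q)
    (hmsym : ∀ u v : X, m u v = m v u)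
    (hmpos : ∀ v : X, v ≠ 0 → 0 < m v v)
    (K : ℕ) (eu : ℕ → X) (ep : ℕ → Y)
    (r1 : ℕ → X →L[ℝ] ℝ) (r2 : ℕ → Y →L[ℝ] ℝ)
    (heu0 : eu 0 = 0)
    (heq1 : ∀ j : ℕ, 1 ≤ j → j ≤ K → ∀ v : X,
      (1 / Δt) * m (eu j - eu (j - 1)) v + a (eu j) v + b v (ep j) = r1 j v)
    (heq2 : ∀ j : ℕ, 1 ≤ j → j ≤ K → ∀ q : Y,
      b (eu j) q - ε * c (ep j) q = r2 j q) :
    ∀ k : ℕ, 1 ≤ k → k ≤ K →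
      m (eu k) (eu k) +
          Δt * ∑ j ∈ Finset.Icc 1 k, (a (eu j) (eu j) + ε * c (ep j) (ep j)) ≤
        Δt * ∑ j ∈ Finset.Icc 1 k, (‖r1 j‖ ^ 2 / αa + ‖r2 j‖ ^ 2 / (ε * αc)) := by
  have hΔtne : Δt ≠ 0 := ne_of_gt hΔt
  have hmnn : ∀ v : X, 0 ≤ m v v := by
    intro v
    by_cases h : v = 0
    · simp [h]
    · exact (hmpos v h).le
  -- key per-step estimate
  have key : ∀ j : ℕ, 1 ≤ j → j ≤ K →
      m (eu j) (eu j) - m (eu (j - 1)) (eu (j - 1)) +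
        Δt * (a (eu j) (eu j) + ε * c (ep j) (ep j)) ≤
      Δt * (‖r1 j‖ ^ 2 / αa + ‖r2 j‖ ^ 2 / (ε * αc)) := by
    intro j hj1 hjK
    set u := eu j with hu
    set w := eu (j - 1) with hw
    set p := ep j with hp
    have E1 := heq1 j hj1 hjK u
    have E2 := heq2 j hj1 hjK p
    have hd1 : m (u - w) u = m u u - m w u := by simp [map_sub]
    have hd2 : m (u - w) (u - w) = m u u - m w u - (m u w - m w w) := by
      simp [map_sub]
    have hdnn : 0 ≤ m (u - w) (u - w) := hmnn _
    have hsymuw := hmsym u w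
    have hsq : m u u - m w w ≤ 2 * m (u - w) u := by linarith
    have ha := hacoer u
    have hc := hccoer p
    have hr1 : (r1 j) u ≤ ‖r1 j‖ * ‖u‖ := by
      have := (r1 j).le_opNorm u
      rw [Real.norm_eq_abs] at this
      exact (le_abs_self _).trans this
    have hr2 : -((r2 j) p) ≤ ‖r2 j‖ * ‖p‖ := by
      have := (r2 j).le_opNorm p
      rw [Real.norm_eq_abs] at this
      exact (neg_le_abs _).trans this
    have y1 : ‖r1 j‖ * ‖u‖ ≤ ‖r1 j‖ ^ 2 / (2 * αa) + αa * ‖u‖ ^ 2 / 2 :=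
      young_aux _ _ _ hαa
    have y2 : ‖r2 j‖ * ‖p‖ ≤ ‖r2 j‖ ^ 2 / (2 * (ε * αc)) + (ε * αc) * ‖p‖ ^ 2 / 2 :=
      young_aux _ _ _ (mul_pos hε hαc)
    have hcc : ε * αc * ‖p‖ ^ 2 ≤ ε * c p p := by
      have := hccoer p
      nlinarith
    -- combine the two tested equations
    have hcomb : (1 / Δt) * m (u - w) u + a u u + ε * c p p = (r1 j) u - (r2 j) p := by
      linarith
    have hstep : (1 / Δt) * m (u - w) u + a u u / 2 + ε * c p p / 2 ≤
        ‖r1 j‖ ^ 2 / (2 * αa) + ‖r2 j‖ ^ 2 / (2 * (ε * αc)) := by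
      nlinarith
    have hmul := mul_step_aux Δt (m (u - w) u) (a u u) (ε * c p p)
      (‖r1 j‖ ^ 2 / (2 * αa)) (‖r2 j‖ ^ 2 / (2 * (ε * αc))) hΔt hstep
    have hEq := rhs_eq_aux Δt (‖r1 j‖ ^ 2) (‖r2 j‖ ^ 2) αa (ε * αc)
      (ne_of_gt hαa) (ne_of_gt (mul_pos hε hαc))
    rw [hEq]
    linarith
  intro k hk1 hkK
  induction k, hk1 using Nat.le_induction with
  | base =>
      have h := key 1 le_rfl hkK
      have h0 : m (eu 0) (eu 0) = 0 := by rw [heu0, map_zero]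
      simp only [Finset.Icc_self, Finset.sum_singleton]
      have : (1 : ℕ) - 1 = 0 := rfl
      rw [this] at h
      linarith
  | succ k hk ih =>
      have hkK' : k ≤ K := le_trans (Nat.le_succ k) hkK
      have ih' := ih hkK'
      have h := key (k + 1) (by omega) hkK
      have : k + 1 - 1 = k := rfl
      rw [this] at h
      rw [Finset.sum_Icc_succ_top (by omega : 1 ≤ k + 1),
        Finset.sum_Icc_succ_top (by omega : 1 ≤ k + 1), mul_add, mul_add]
      linarith
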